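/- Any Busemann function on a proper geodesic metric space is distance-like: if X is a proper geodesic metric space, c a geodesic ray in X, and b : X → ℝ its Busemann function (i.e., for every x ∈ X, d(x, c(t)) − t → b(x) as t → ∞), then b is continuous and for every x ∈ X and λ ∈ ℝ with b(x) ≥ λ, the level set b⁻¹(λ) is nonempty and b(x) = λ + dist(x, b⁻¹(λ)). -/

import Mathlib

open Filter Metric Topology

/-- A *geodesic segment* from `x` to `y` is an isometric embedding
`γ : [0, dist x y] → X` with `γ 0 = x` and `γ (dist x y) = y`. -/
def IsGeodesicSegment {X : Type*} [MetricSpace X] (γ : ℝ → X) (x y : X) : Prop :=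
  γ 0 = x ∧ γ (dist x y) = y ∧
    ∀ s ∈ Set.Icc (0 : ℝ) (dist x y), ∀ t ∈ Set.Icc (0 : ℝ) (dist x y),
      dist (γ s) (γ t) = |s - t|

/-- A metric space is *geodesic* if every pair of points is joined by a geodesic segment. -/
def IsGeodesicSpace (X : Type*) [MetricSpace X] : Prop :=
  ∀ x y : X, ∃ γ : ℝ → X, IsGeodesicSegment γ x y

/-- A *geodesic ray* in a metric space. -/
def IsGeodesicRay {X : Type*} [MetricSpace X] (c : ℝ → X) : Prop :=
  ∀ s t : ℝ, 0 ≤ s → 0 ≤ t → dist (c s) (c t) = |s - t|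

/-- any Busemann function on a proper geodesic metric space is distance-like. -/
theorem busemann_is_distanceLike {X : Type*} [MetricSpace X] [ProperSpace X]
    (hX : IsGeodesicSpace X) (c : ℝ → X) (hc : IsGeodesicRay c) (b : X → ℝ)
    (hb : ∀ x : X, Filter.Tendsto (fun t : ℝ => dist x (c t) - t) Filter.atTop (nhds (b x))) :
    Continuous b ∧ ∀ (x : X) (lam : ℝ), lam ≤ b x →
      (b ⁻¹' {lam}).Nonempty ∧ b x = lam + Metric.infDist x (b ⁻¹' {lam}) := by
  -- `b` is 1-Lipschitz
  have hlip : ∀ x y : X, dist (b x) (b y) ≤ dist x y := by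
    intro x y
    have h1 : Tendsto (fun t : ℝ => (dist x (c t) - t) - (dist y (c t) - t)) atTop
        (nhds (b x - b y)) := (hb x).sub (hb y)
    have h2 : Tendsto (fun t : ℝ => (dist y (c t) - t) - (dist x (c t) - t)) atTop
        (nhds (b y - b x)) := (hb y).sub (hb x)
    have e1 : b x - b y ≤ dist x y := by
      refine le_of_tendsto h1 (Filter.Eventually.of_forall fun t => ?_)
      have h := abs_le.mp (abs_dist_sub_le x y (c t))
      linarith [h.2]
    have e2 : b y - b x ≤ dist x y := by
      refine le_of_tendsto h2 (Filter.Eventually.of_forall fun t => ?_)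
      have h := abs_le.mp (abs_dist_sub_le x y (c t))
      linarith [h.1]
    rw [Real.dist_eq, abs_sub_le_iff]
    exact ⟨e1, e2⟩
  refine ⟨(LipschitzWith.of_dist_le_mul (K := 1) (by simpa using hlip)).continuous, ?_⟩
  intro x lam hlam
  set s : ℝ := b x - lam with hsdef
  have hs : 0 ≤ s := by simp only [hsdef]; linarith
  obtain ⟨T, hT⟩ := (Filter.eventually_atTop).mp
    ((hb x).eventually (eventually_gt_nhds (show b x - 1 < b x by linarith)))
  set C : ℝ := max T (max (s - b x + 1) 0) with hC
  set tt : ℕ → ℝ := fun n => C + n with htt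
  have hd : ∀ n, s ≤ dist x (c (tt n)) := by
    intro n
    have h1 : T ≤ tt n :=
      le_trans (le_max_left _ _) (le_add_of_nonneg_right (Nat.cast_nonneg n))
    have h2 := hT (tt n) h1
    have h3 : s - b x + 1 ≤ tt n :=
      le_trans (le_trans (le_max_left _ _) (le_max_right _ _))
        (le_add_of_nonneg_right (Nat.cast_nonneg n))
    linarith
  choose γ hγ using fun n => hX x (c (tt n))
  set p : ℕ → X := fun n => γ n s with hp
  have hxp : ∀ n, dist x (p n) = s := by
    intro n
    obtain ⟨h0, he, hiso⟩ := hγ n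
    have h := hiso 0 ⟨le_refl 0, dist_nonneg⟩ s ⟨hs, hd n⟩
    rw [h0] at h
    simpa [hp, zero_sub, abs_neg, abs_of_nonneg hs] using h
  have hpc : ∀ n, dist (p n) (c (tt n)) = dist x (c (tt n)) - s := by
    intro n
    obtain ⟨h0, he, hiso⟩ := hγ n
    have h := hiso s ⟨hs, hd n⟩ (dist x (c (tt n))) ⟨dist_nonneg, le_refl _⟩
    rw [he] at h
    rw [hp]
    rw [h, abs_of_nonpos (by linarith [hd n]), neg_sub]
  have hmem : ∀ n, p n ∈ Metric.closedBall x s := by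
    intro n
    rw [Metric.mem_closedBall, dist_comm, hxp n]
  obtain ⟨z, hzball, φ, hφ, hconv⟩ := (isCompact_closedBall x s).tendsto_subseq hmem
  have htend : Tendsto (fun n => tt (φ n)) atTop atTop := by
    have h1 : Tendsto (fun n : ℕ => ((φ n : ℕ) : ℝ)) atTop atTop :=
      tendsto_natCast_atTop_atTop.comp hφ.tendsto_atTop
    simpa [htt] using tendsto_atTop_add_const_left atTop C h1
  have hbz : Tendsto (fun n => dist z (c (tt (φ n))) - tt (φ n)) atTop (nhds (b z)) :=
    (hb z).comp htend
  have hbx' : Tendsto (fun n => dist x (c (tt (φ n))) - tt (φ n)) atTop (nhds (b x)) :=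
    (hb x).comp htend
  have hzero : Tendsto (fun n => dist z (p (φ n))) atTop (nhds 0) := by
    have h := (tendsto_const_nhds : Tendsto (fun _ : ℕ => z) atTop (nhds z)).dist hconv
    simpa using h
  have hA : Tendsto (fun n => dist z (p (φ n)) + (dist x (c (tt (φ n))) - tt (φ n)) - s)
      atTop (nhds (0 + b x - s)) := (hzero.add hbx').sub_const s
  have hle : b z ≤ 0 + b x - s := by
    refine le_of_tendsto_of_tendsto' hbz hA fun n => ?_
    have tri := dist_triangle z (p (φ n)) (c (tt (φ n)))
    have h := hpc (φ n)
    linarith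
  have hdxz : dist x z ≤ s := by
    rw [dist_comm]; exact Metric.mem_closedBall.mp hzball
  have hzlam : b z = lam := by
    have h1 : b x - b z ≤ dist x z := by
      have := hlip x z
      rw [Real.dist_eq] at this
      linarith [le_abs_self (b x - b z)]
    have h2 : b z ≤ lam := by simp only [hsdef] at hle; linarith
    have h3 : lam ≤ b z := by linarith [hsdef, hdxz]
    linarith
  have hzmem : z ∈ b ⁻¹' {lam} := by
    simp [Set.mem_preimage, hzlam]
  refine ⟨⟨z, hzmem⟩, ?_⟩
  have h1 : Metric.infDist x (b ⁻¹' {lam}) ≤ dist x z :=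
    Metric.infDist_le_dist_of_mem hzmem
  have h2 : s ≤ Metric.infDist x (b ⁻¹' {lam}) := by
    by_contra hcon
    push_neg at hcon
    obtain ⟨w, hw, hwd⟩ := (Metric.infDist_lt_iff ⟨z, hzmem⟩).mp hcon
    have hw' : b w = lam := hw
    have := hlip x w
    rw [Real.dist_eq] at this
    have := le_abs_self (b x - b w)
    linarith [hsdef]
  simp only [hsdef] at h1 h2
  linarith
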